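/- For d ≥ 0, a scaling 𝔰 ∈ ℕ^{d+1}, α ∈ ℝ₊, points x, x̄, y ∈ ℝ^{d+1} and a smooth function f : ℝ^{d+1} → ℝ, the Taylor jet operators satisfy the recombination identity T_{α,x,y} f = ∑_{|ℓ|_𝔰 < α} (y − x̄)^ℓ/ℓ! · T_{α−|ℓ|_𝔰, x, x̄}[D^ℓ f]. -/

import Mathlib

open scoped BigOperators

/-- Partial derivative of `f : ℝ^{d+1} → ℝ` in the `i`-th coordinate direction. -/
noncomputable def pderiv' {n : ℕ} (i : Fin n) (f : (Fin n → ℝ) → ℝ) :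
    (Fin n → ℝ) → ℝ :=
  fun x => fderiv ℝ f x (Pi.single i 1)

/-- Mixed partial derivative `D^ℓ` of multi-order `ℓ`. -/
noncomputable def mderiv {n : ℕ} (ℓ : Fin n → ℕ) (f : (Fin n → ℝ) → ℝ) :
    (Fin n → ℝ) → ℝ :=
  (((List.finRange n).map fun i => (pderiv' i)^[ℓ i]).foldr (· ∘ ·) id) f

/-- The `𝔰`-scaled Taylor jet operator
`T_{α,x,y} f = ∑_{|ℓ|_𝔰 < α} (y−x)^ℓ/ℓ! (D^ℓ f)(x)`. -/
noncomputable def tjet {n : ℕ} (s : Fin n → ℕ) (α : ℝ) (x : Fin n → ℝ)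
    (f : (Fin n → ℝ) → ℝ) : (Fin n → ℝ) → ℝ :=
  fun y => ∑ᶠ ℓ : Fin n → ℕ,
    if (∑ i, (s i * ℓ i : ℝ)) < α then
      (∏ i, (y i - x i) ^ ℓ i) / (∏ i, ((ℓ i).factorial : ℝ)) * mderiv ℓ f x
    else 0

section Analytic

lemma pderiv'_contDiff {n : ℕ} (i : Fin n) {f : (Fin n → ℝ) → ℝ}
    (hf : ContDiff ℝ (⊤ : ℕ∞) f) : ContDiff ℝ (⊤ : ℕ∞) (pderiv' i f) :=
  (hf.fderiv_right (by exact_mod_cast le_refl _)).clm_apply contDiff_const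

lemma pderiv'_comm {n : ℕ} (i j : Fin n) {f : (Fin n → ℝ) → ℝ}
    (hf : ContDiff ℝ (⊤ : ℕ∞) f) :
    pderiv' i (pderiv' j f) = pderiv' j (pderiv' i f) := by
  funext z
  have hsym : IsSymmSndFDerivAt ℝ f z := by
    apply ContDiffAt.isSymmSndFDerivAt (n := ((⊤:ℕ∞) : WithTop ℕ∞)) hf.contDiffAt
    rw [minSmoothness_of_isRCLikeNormedField]; exact WithTop.coe_le_coe.mpr (le_top : (2:ℕ∞) ≤ ⊤)
  have key : ∀ v w : Fin n → ℝ,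
      fderiv ℝ (fun z => fderiv ℝ f z w) z v = fderiv ℝ (fderiv ℝ f) z v w := by
    intro v w
    have hd : DifferentiableAt ℝ (fderiv ℝ f) z :=
      (((hf.fderiv_right (by exact_mod_cast le_refl _)) :
        ContDiff ℝ (⊤:ℕ∞) (fderiv ℝ f)).differentiable
        (by simp)).differentiableAt
    have := (hd.hasFDerivAt.clm_apply (hasFDerivAt_const w z)).fderiv
    rw [this]; simp
  show fderiv ℝ (fun z => fderiv ℝ f z (Pi.single j 1)) z (Pi.single i 1)
    = fderiv ℝ (fun z => fderiv ℝ f z (Pi.single i 1)) z (Pi.single j 1)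
  rw [key, key]
  exact hsym _ _

lemma pderiv'_iter_contDiff {n : ℕ} (i : Fin n) (c : ℕ) {f : (Fin n → ℝ) → ℝ}
    (hf : ContDiff ℝ (⊤ : ℕ∞) f) : ContDiff ℝ (⊤ : ℕ∞) ((pderiv' i)^[c] f) := by
  induction c with
  | zero => exact hf
  | succ c ih => rw [Function.iterate_succ_apply']; exact pderiv'_contDiff i ih

lemma pderiv'_iter_comm {n : ℕ} (i j : Fin n) (c : ℕ) {f : (Fin n → ℝ) → ℝ}
    (hf : ContDiff ℝ (⊤ : ℕ∞) f) :
    pderiv' i ((pderiv' j)^[c] f) = (pderiv' j)^[c] (pderiv' i f) := by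
  induction c with
  | zero => rfl
  | succ c ih =>
      rw [Function.iterate_succ_apply', Function.iterate_succ_apply',
        pderiv'_comm i j (pderiv'_iter_contDiff j c hf), ih]

/-- `G m l f` applies `(pderiv' i)^[m i]` for `i` in the list `l`. -/
noncomputable def G {n : ℕ} (m : Fin n → ℕ) (l : List (Fin n))
    (f : (Fin n → ℝ) → ℝ) : (Fin n → ℝ) → ℝ :=
  (l.map fun i => (pderiv' i)^[m i]).foldr (· ∘ ·) id f

lemma G_cons {n : ℕ} (m : Fin n → ℕ) (a : Fin n) (t : List (Fin n))
    (f : (Fin n → ℝ) → ℝ) : G m (a :: t) f = (pderiv' a)^[m a] (G m t f) := rfl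

lemma mderiv_eq_G {n : ℕ} (m : Fin n → ℕ) (f : (Fin n → ℝ) → ℝ) :
    mderiv m f = G m (List.finRange n) f := rfl

lemma G_contDiff {n : ℕ} (m : Fin n → ℕ) (l : List (Fin n))
    {f : (Fin n → ℝ) → ℝ} (hf : ContDiff ℝ (⊤ : ℕ∞) f) :
    ContDiff ℝ (⊤ : ℕ∞) (G m l f) := by
  induction l with
  | nil => exact hf
  | cons a t ih => rw [G_cons]; exact pderiv'_iter_contDiff a (m a) ih

lemma pderiv'_G_comm {n : ℕ} (i : Fin n) (m : Fin n → ℕ) (l : List (Fin n))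
    {f : (Fin n → ℝ) → ℝ} (hf : ContDiff ℝ (⊤ : ℕ∞) f) :
    pderiv' i (G m l f) = G m l (pderiv' i f) := by
  induction l with
  | nil => rfl
  | cons a t ih =>
      rw [G_cons, pderiv'_iter_comm i a (m a) (G_contDiff m t hf), ih, G_cons]

lemma pderiv'_iter_G_comm {n : ℕ} (i : Fin n) (c : ℕ) (m : Fin n → ℕ)
    (l : List (Fin n)) {f : (Fin n → ℝ) → ℝ} (hf : ContDiff ℝ (⊤ : ℕ∞) f) :
    (pderiv' i)^[c] (G m l f) = G m l ((pderiv' i)^[c] f) := by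
  induction c with
  | zero => rfl
  | succ c ih =>
      rw [Function.iterate_succ_apply', Function.iterate_succ_apply', ih,
        pderiv'_G_comm i m l (pderiv'_iter_contDiff i c hf)]

lemma G_G {n : ℕ} (k ℓ : Fin n → ℕ) (l : List (Fin n)) {f : (Fin n → ℝ) → ℝ}
    (hf : ContDiff ℝ (⊤ : ℕ∞) f) :
    G k l (G ℓ l f) = G (ℓ + k) l f := by
  induction l with
  | nil => rfl
  | cons a t ih =>
      rw [G_cons, G_cons, ← pderiv'_iter_G_comm a (ℓ a) k t (G_contDiff ℓ t hf),
        ← Function.iterate_add_apply, ih, G_cons]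
      have : k a + ℓ a = (ℓ + k) a := by simp [add_comm]
      rw [this]

lemma mderiv_mderiv {n : ℕ} (k ℓ : Fin n → ℕ) {f : (Fin n → ℝ) → ℝ}
    (hf : ContDiff ℝ (⊤ : ℕ∞) f) :
    mderiv k (mderiv ℓ f) = mderiv (ℓ + k) f := by
  rw [mderiv_eq_G, mderiv_eq_G, mderiv_eq_G]
  exact G_G k ℓ _ hf

end Analytic

section Algebra

open Finset

lemma binom_pi {n : ℕ} (m : Fin n → ℕ) (u v : Fin n → ℝ) :
    (∏ i, (u i + v i) ^ m i) / (∏ i, ((m i).factorial : ℝ)) =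
    ∑ ℓ ∈ Fintype.piFinset (fun i => Finset.range (m i + 1)),
      (∏ i, u i ^ ℓ i * v i ^ (m i - ℓ i)) /
        ((∏ i, ((ℓ i).factorial : ℝ)) * (∏ i, ((m i - ℓ i).factorial : ℝ))) := by
  have h1 : ∀ i : Fin n, (u i + v i) ^ m i
      = ∑ j ∈ Finset.range (m i + 1), u i ^ j * v i ^ (m i - j) * ((m i).choose j : ℝ) := by
    intro i; exact add_pow (u i) (v i) (m i)
  rw [Finset.prod_congr rfl fun i _ => h1 i, Finset.prod_univ_sum]
  rw [Finset.sum_div]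
  refine Finset.sum_congr rfl fun ℓ hℓ => ?_
  have hle : ∀ i, ℓ i ≤ m i := by
    intro i
    have := (Fintype.mem_piFinset.mp hℓ) i
    exact Nat.lt_succ_iff.mp (Finset.mem_range.mp this)
  have hc : ∀ i : Fin n, (((m i).choose (ℓ i) : ℝ))
      = ((m i).factorial : ℝ) / (((ℓ i).factorial : ℝ) * ((m i - ℓ i).factorial : ℝ)) :=
    fun i => Nat.cast_choose ℝ (hle i)
  rw [Finset.prod_congr rfl fun i _ => (by rw [hc i] :
    u i ^ ℓ i * v i ^ (m i - ℓ i) * ((m i).choose (ℓ i) : ℝ)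
      = u i ^ ℓ i * v i ^ (m i - ℓ i) *
        (((m i).factorial : ℝ) / (((ℓ i).factorial : ℝ) * ((m i - ℓ i).factorial : ℝ))))]
  rw [Finset.prod_mul_distrib, Finset.prod_div_distrib, Finset.prod_mul_distrib]
  have hm : (∏ i, ((m i).factorial : ℝ)) ≠ 0 :=
    Finset.prod_ne_zero_iff.mpr fun i _ => Nat.cast_ne_zero.mpr (Nat.factorial_ne_zero _)
  have hl : (∏ i, ((ℓ i).factorial : ℝ)) ≠ 0 :=
    Finset.prod_ne_zero_iff.mpr fun i _ => Nat.cast_ne_zero.mpr (Nat.factorial_ne_zero _)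
  have hml : (∏ i, ((m i - ℓ i).factorial : ℝ)) ≠ 0 :=
    Finset.prod_ne_zero_iff.mpr fun i _ => Nat.cast_ne_zero.mpr (Nat.factorial_ne_zero _)
  field_simp
  rw [Finset.prod_mul_distrib]
  ring

/-- A single weight is bounded by the full weighted sum. -/
lemma single_le_wsum {n : ℕ} (s : Fin n → ℕ) (hs : ∀ i, 0 < s i) (ℓ : Fin n → ℕ)
    (i : Fin n) : (ℓ i : ℝ) ≤ ∑ j, (s j * ℓ j : ℝ) := by
  have h1 : (ℓ i : ℝ) ≤ (s i : ℝ) * (ℓ i : ℝ) := by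
    have : (1 : ℝ) ≤ (s i : ℝ) := by exact_mod_cast hs i
    nlinarith [Nat.cast_nonneg (α := ℝ) (ℓ i)]
  refine h1.trans ?_
  exact Finset.single_le_sum (f := fun j => ((s j : ℝ) * (ℓ j : ℝ)))
    (fun j _ => by positivity) (Finset.mem_univ i)

lemma mem_T_of_lt {n : ℕ} (s : Fin n → ℕ) (hs : ∀ i, 0 < s i) {α β : ℝ}
    (hβ : β ≤ α) (ℓ : Fin n → ℕ) (h : (∑ i, (s i * ℓ i : ℝ)) < β) :
    ℓ ∈ Fintype.piFinset (fun _ : Fin n => Finset.range (⌈α⌉₊ + 1)) := by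
  rw [Fintype.mem_piFinset]
  intro i
  rw [Finset.mem_range, Nat.lt_succ_iff]
  have h1 : (ℓ i : ℝ) < α := lt_of_le_of_lt (single_le_wsum s hs ℓ i) (lt_of_lt_of_le h hβ)
  have h2 : (ℓ i : ℝ) ≤ (⌈α⌉₊ : ℝ) := h1.le.trans (Nat.le_ceil α)
  exact_mod_cast h2

/-- Convert the finsum defining a jet-type expression into a finite sum over the
box `T = {ℓ : ∀ i, ℓ i ≤ ⌈α⌉₊}`. -/
lemma finsum_eq_sum_T {n : ℕ} (s : Fin n → ℕ) (hs : ∀ i, 0 < s i) {α β : ℝ}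
    (hβ : β ≤ α) (g : (Fin n → ℕ) → ℝ) :
    (∑ᶠ ℓ : Fin n → ℕ, if (∑ i, (s i * ℓ i : ℝ)) < β then g ℓ else 0)
      = ∑ ℓ ∈ Fintype.piFinset (fun _ : Fin n => Finset.range (⌈α⌉₊ + 1)),
          if (∑ i, (s i * ℓ i : ℝ)) < β then g ℓ else 0 := by
  apply finsum_eq_sum_of_support_subset
  intro ℓ hℓ
  simp only [Function.mem_support] at hℓ
  by_cases hc : (∑ i, (s i * ℓ i : ℝ)) < β
  · exact mem_T_of_lt s hs hβ ℓ hc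
  · simp [hc] at hℓ

end Algebra

/-- the recombination identity
`T_{α,x,y} f = ∑_{|ℓ|_𝔰 < α} (y − x̄)^ℓ/ℓ! · T_{α−|ℓ|_𝔰, x, x̄}[D^ℓ f]`. -/
theorem tjet_recombination {d : ℕ} (s : Fin (d + 1) → ℕ) (hs : ∀ i, 0 < s i)
    (α : ℝ) (hα : 0 ≤ α) (x xb y : Fin (d + 1) → ℝ)
    (f : (Fin (d + 1) → ℝ) → ℝ) (hf : ContDiff ℝ (⊤ : ℕ∞) f) :
    tjet s α x f y
      = ∑ᶠ ℓ : Fin (d + 1) → ℕ,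
          if (∑ i, (s i * ℓ i : ℝ)) < α then
            (∏ i, (y i - xb i) ^ ℓ i) / (∏ i, ((ℓ i).factorial : ℝ))
              * tjet s (α - ∑ i, (s i * ℓ i : ℝ)) x (mderiv ℓ f) xb
          else 0 := by
  classical
  set N := ⌈α⌉₊ with hN
  set T : Finset (Fin (d+1) → ℕ) := Fintype.piFinset (fun _ : Fin (d+1) => Finset.range (N + 1)) with hT
  -- weighted degree
  set S : (Fin (d+1) → ℕ) → ℝ := fun ℓ => ∑ i, (s i * ℓ i : ℝ) with hS
  have Snonneg : ∀ ℓ, 0 ≤ S ℓ := fun ℓ =>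
    Finset.sum_nonneg fun i _ => by positivity
  have Sadd : ∀ ℓ k : Fin (d+1) → ℕ, S (ℓ + k) = S ℓ + S k := by
    intro ℓ k
    simp only [hS, Pi.add_apply]
    rw [← Finset.sum_add_distrib]
    refine Finset.sum_congr rfl fun i _ => ?_
    push_cast
    ring
  -- Right-hand side as double finite sum
  rw [tjet, finsum_eq_sum_T s hs (le_refl α)]
  have hRHS : (∑ᶠ ℓ : Fin (d+1) → ℕ,
        if S ℓ < α then
          (∏ i, (y i - xb i) ^ ℓ i) / (∏ i, ((ℓ i).factorial : ℝ))
            * tjet s (α - S ℓ) x (mderiv ℓ f) xb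
        else 0)
      = ∑ ℓ ∈ T, ∑ k ∈ T,
          if S ℓ + S k < α then
            ((∏ i, (y i - xb i) ^ ℓ i) / (∏ i, ((ℓ i).factorial : ℝ)))
              * (((∏ i, (xb i - x i) ^ k i) / (∏ i, ((k i).factorial : ℝ)))
                  * mderiv (ℓ + k) f x)
          else 0 := by
    rw [finsum_eq_sum_T s hs (le_refl α)]
    refine Finset.sum_congr rfl fun ℓ _ => ?_
    by_cases hP : S ℓ < α
    · rw [if_pos hP]
      rw [tjet, finsum_eq_sum_T s hs (sub_le_self α (Snonneg ℓ)), Finset.mul_sum]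
      refine Finset.sum_congr rfl fun k _ => ?_
      have hiff : (S k < α - S ℓ) ↔ (S ℓ + S k < α) := lt_sub_iff_add_lt'
      by_cases hQ : S ℓ + S k < α
      · rw [if_pos (hiff.mpr hQ), if_pos hQ, mderiv_mderiv k ℓ hf]
      · rw [if_neg (fun h => hQ (hiff.mp h)), if_neg hQ, mul_zero]
    · rw [if_neg hP]
      rw [Finset.sum_eq_zero]
      intro k _
      rw [if_neg]
      intro h
      exact hP (lt_of_le_of_lt (le_add_of_nonneg_right (Snonneg k)) h)
  rw [hRHS]
  -- Left-hand side: expand via the binomial identity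
  have hbin : ∀ m : Fin (d+1) → ℕ,
      (if S m < α then
        (∏ i, (y i - x i) ^ m i) / (∏ i, ((m i).factorial : ℝ)) * mderiv m f x else 0)
      = ∑ ℓ ∈ Fintype.piFinset (fun i => Finset.range (m i + 1)),
          if S m < α then
            ((∏ i, (y i - xb i) ^ ℓ i * (xb i - x i) ^ (m i - ℓ i)) /
              ((∏ i, ((ℓ i).factorial : ℝ)) * (∏ i, ((m i - ℓ i).factorial : ℝ))))
              * mderiv m f x
          else 0 := by
    intro m
    by_cases hP : S m < α
    · simp only [if_pos hP]
      have : (∏ i, (y i - x i) ^ m i) / (∏ i, ((m i).factorial : ℝ))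
          = ∑ ℓ ∈ Fintype.piFinset (fun i => Finset.range (m i + 1)),
              (∏ i, (y i - xb i) ^ ℓ i * (xb i - x i) ^ (m i - ℓ i)) /
                ((∏ i, ((ℓ i).factorial : ℝ)) * (∏ i, ((m i - ℓ i).factorial : ℝ))) := by
        have := binom_pi m (fun i => y i - xb i) (fun i => xb i - x i)
        simpa using this
      rw [this, Finset.sum_mul]
    · simp [if_neg hP]
  rw [Finset.sum_congr rfl fun m _ => hbin m]
  -- Now both sides are finite double sums; reindex via (m, ℓ) ↦ (ℓ, m - ℓ).
  rw [Finset.sum_sigma', ← Finset.sum_product']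
  -- restrict the product to the pairs with ℓ i + k i ≤ N
  rw [show (∑ p ∈ T ×ˢ T,
        if S p.1 + S p.2 < α then
          ((∏ i, (y i - xb i) ^ p.1 i) / (∏ i, ((p.1 i).factorial : ℝ)))
            * (((∏ i, (xb i - x i) ^ p.2 i) / (∏ i, ((p.2 i).factorial : ℝ)))
                * mderiv (p.1 + p.2) f x)
        else 0)
      = ∑ p ∈ (T ×ˢ T).filter (fun p => ∀ i, p.1 i + p.2 i ≤ N),
          if S p.1 + S p.2 < α then
            ((∏ i, (y i - xb i) ^ p.1 i) / (∏ i, ((p.1 i).factorial : ℝ)))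
              * (((∏ i, (xb i - x i) ^ p.2 i) / (∏ i, ((p.2 i).factorial : ℝ)))
                  * mderiv (p.1 + p.2) f x)
          else 0 from ?_]
  · -- the bijection
    refine Finset.sum_nbij' (fun q => (q.2, q.1 - q.2)) (fun p => ⟨p.1 + p.2, p.1⟩)
      ?_ ?_ ?_ ?_ ?_
    · rintro ⟨m, ℓ⟩ hq
      rw [Finset.mem_sigma] at hq
      obtain ⟨hm, hℓ⟩ := hq
      dsimp only at hm hℓ ⊢
      have hmN : ∀ i, m i ≤ N := by
        intro i
        have := Fintype.mem_piFinset.mp hm i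
        rw [Finset.mem_range] at this; omega
      have hle : ∀ i, ℓ i ≤ m i := by
        intro i
        have := Fintype.mem_piFinset.mp hℓ i
        rw [Finset.mem_range] at this; omega
      rw [Finset.mem_filter, Finset.mem_product]
      dsimp only
      refine ⟨⟨?_, ?_⟩, ?_⟩
      · rw [Fintype.mem_piFinset]
        intro i; rw [Finset.mem_range]
        have := hle i; have := hmN i; omega
      · rw [Fintype.mem_piFinset]
        intro i; rw [Finset.mem_range]
        simp only [Pi.sub_apply]
        have := hle i; have := hmN i; omega
      · intro i
        simp only [Pi.sub_apply]
        have := hle i; have := hmN i; omega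
    · rintro ⟨ℓ, k⟩ hp
      rw [Finset.mem_filter, Finset.mem_product] at hp
      obtain ⟨⟨h1, h2⟩, h3⟩ := hp
      dsimp only at h1 h2 h3 ⊢
      rw [Finset.mem_sigma]
      constructor
      · rw [Fintype.mem_piFinset]
        intro i; rw [Finset.mem_range]
        have := h3 i; simp only [Pi.add_apply]; omega
      · rw [Fintype.mem_piFinset]
        intro i; rw [Finset.mem_range]
        simp only [Pi.add_apply]; omega
    · rintro ⟨m, ℓ⟩ hq
      rw [Finset.mem_sigma] at hq
      obtain ⟨hm, hℓ⟩ := hq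
      dsimp only at hm hℓ ⊢
      have hle : ∀ i, ℓ i ≤ m i := by
        intro i
        have := Fintype.mem_piFinset.mp hℓ i
        rw [Finset.mem_range] at this; omega
      have hrec : ℓ + (m - ℓ) = m := by
        funext i
        simp only [Pi.add_apply, Pi.sub_apply]
        have := hle i; omega
      simp only [hrec]
    · rintro ⟨ℓ, k⟩ hp
      dsimp only at hp ⊢
      have : (ℓ + k) - ℓ = k := by
        funext i
        simp only [Pi.add_apply, Pi.sub_apply]
        omega
      simp only [this]
    · rintro ⟨m, ℓ⟩ hq
      rw [Finset.mem_sigma] at hq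
      obtain ⟨hm, hℓ⟩ := hq
      dsimp only at hm hℓ ⊢
      have hle : ∀ i, ℓ i ≤ m i := by
        intro i
        have := Fintype.mem_piFinset.mp hℓ i
        rw [Finset.mem_range] at this; omega
      have hrec : ℓ + (m - ℓ) = m := by
        funext i
        simp only [Pi.add_apply, Pi.sub_apply]
        have := hle i; omega
      have hScond : S ℓ + S (m - ℓ) = S m := by rw [← Sadd, hrec]
      simp only [hScond, hrec]
      by_cases hP : S m < α
      · rw [if_pos hP, if_pos hP]
        have hsplit : (∏ i, (y i - xb i) ^ ℓ i * (xb i - x i) ^ (m i - ℓ i))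
            = (∏ i, (y i - xb i) ^ ℓ i) * ∏ i, (xb i - x i) ^ ((m - ℓ) i) := by
          rw [← Finset.prod_mul_distrib]
          exact Finset.prod_congr rfl fun i _ => by simp [Pi.sub_apply]
        have hfac : (∏ i, ((m i - ℓ i).factorial : ℝ))
            = ∏ i, ((((m - ℓ) i)).factorial : ℝ) := by
          exact Finset.prod_congr rfl fun i _ => by simp [Pi.sub_apply]
        rw [hsplit, hfac]
        ring
      · rw [if_neg hP, if_neg hP]
  · -- sum over filtered set equals sum over full product
    symm
    apply Finset.sum_subset (Finset.filter_subset _ _)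
    rintro ⟨ℓ, k⟩ hp hnp
    rw [Finset.mem_filter] at hnp
    push_neg at hnp
    obtain ⟨i, hi⟩ := hnp hp
    dsimp only at hi ⊢
    rw [if_neg]
    rw [not_lt]
    have h1 : (ℓ i : ℝ) ≤ S ℓ := single_le_wsum s hs ℓ i
    have h2 : (k i : ℝ) ≤ S k := single_le_wsum s hs k i
    have h3 : α ≤ (N : ℝ) := Nat.le_ceil α
    have h4 : (N : ℝ) < (ℓ i : ℝ) + (k i : ℝ) := by exact_mod_cast hi
    linarith
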